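/- CDFA(𝕃) ⊆ CDFA(inf,⊓). -/

import Mathlib

open Set

/-- A finite automaton used for recognizing ω-words over the alphabet `A`:
a finite type of states, a transition relation, an initial state and an
acceptance table (a set of sets of states). -/
structure OFA (A : Type) : Type 1 where
  Q : Type
  [finQ : Finite Q]
  T : Q → A → Q → Prop
  q0 : Q
  Acc : Set (Set Q)

attribute [instance] OFA.finQ

namespace OFA

variable {A : Type}

/-- Deterministic automaton: at most one successor per state and letter. -/
def Deterministic (M : OFA A) : Prop :=
  ∀ p a q q', M.T p a q → M.T p a q' → q = q'

/-- Complete automaton: at least one successor per state and letter. -/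
def Complete (M : OFA A) : Prop :=
  ∀ p a, ∃ q, M.T p a q

/-- `p` is an initial infinite path of `M` with label `x`. -/
def InitPath (M : OFA A) (p : ℕ → M.Q) (x : ℕ → A) : Prop :=
  p 0 = M.q0 ∧ ∀ i, M.T (p i) (x i) (p (i + 1))

/-- States visited at least once (at a positive index). -/
def runSet (M : OFA A) (p : ℕ → M.Q) : Set M.Q := {q | ∃ i, 0 < i ∧ p i = q}

/-- States visited infinitely often. -/
def infSet (M : OFA A) (p : ℕ → M.Q) : Set M.Q := {q | ∀ n, ∃ i, n ≤ i ∧ p i = q}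

/-- States visited finitely many times but at least once. -/
def finSet (M : OFA A) (p : ℕ → M.Q) : Set M.Q := M.runSet p \ M.infSet p

/-- States visited finitely many times or never. -/
def ninfSet (M : OFA A) (p : ℕ → M.Q) : Set M.Q := (M.infSet p)ᶜ

end OFA

/-- Selector for the set of states associated to a path. -/
inductive CSel | run | inf | fin | ninf

/-- Selector for the comparison relation with a member of the acceptance table. -/
inductive RSel | meet | sub | eq

def OFA.csel {A : Type} (M : OFA A) : CSel → (ℕ → M.Q) → Set M.Q
  | .run => M.runSet
  | .inf => M.infSet
  | .fin => M.finSet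
  | .ninf => M.ninfSet

def RSel.holds {Q : Type} : RSel → Set Q → Set Q → Prop
  | .meet => fun S F => (S ∩ F).Nonempty
  | .sub => fun S F => S ⊆ F
  | .eq => fun S F => S = F

/-- The ω-language accepted by `M` under the condition `(c, r)`. -/
def OFA.Lang {A : Type} (M : OFA A) (c : CSel) (r : RSel) : Set (ℕ → A) :=
  {x | ∃ p, M.InitPath p x ∧ ∃ F ∈ M.Acc, RSel.holds r (M.csel c p) F}

/-- The ω-language accepted by `M` under the condition 𝔸 : some `F ∈ Acc` with `F ⊆ run p`. -/
def OFA.LangA {A : Type} (M : OFA A) : Set (ℕ → A) :=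
  {x | ∃ p, M.InitPath p x ∧ ∃ F ∈ M.Acc, F ⊆ M.runSet p}

/-- The ω-language accepted by `M` under the condition 𝔸' : some `F ∈ Acc` with `F ⊈ run p`. -/
def OFA.LangA' {A : Type} (M : OFA A) : Set (ℕ → A) :=
  {x | ∃ p, M.InitPath p x ∧ ∃ F ∈ M.Acc, ¬ F ⊆ M.runSet p}

/-- The ω-language accepted by `M` under the condition 𝕃 : some `F ∈ Acc` with `F ⊆ inf p`. -/
def OFA.LangL {A : Type} (M : OFA A) : Set (ℕ → A) :=
  {x | ∃ p, M.InitPath p x ∧ ∃ F ∈ M.Acc, F ⊆ M.infSet p}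

/-- The ω-language accepted by `M` under the condition 𝕃' : some `F ∈ Acc` with `F ⊈ inf p`. -/
def OFA.LangL' {A : Type} (M : OFA A) : Set (ℕ → A) :=
  {x | ∃ p, M.InitPath p x ∧ ∃ F ∈ M.Acc, ¬ F ⊆ M.infSet p}

/-- The class of ω-languages of the form `L M` for automata `M` satisfying `P`. -/
def AutClass (A : Type) (P : OFA A → Prop) (L : (M : OFA A) → Set (ℕ → A)) :
    Set (Set (ℕ → A)) :=
  {X | ∃ M : OFA A, P M ∧ L M = X}

/-- The finite factor `x_i x_{i+1} … x_{j-1}` of the ω-word `x`. -/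
def extract {A : Type} (x : ℕ → A) (i j : ℕ) : List A :=
  (List.range (j - i)).map fun k => x (i + k)

/-- The ω-language `V · U^ω`: ω-words of the form `u₀u₁u₂⋯` with `u₀ ∈ V`
and all `uᵢ` (i ≥ 1) nonempty words of `U`, described via cut points. -/
def omegaPiece {A : Type} (V U : Language A) : Set (ℕ → A) :=
  {x | ∃ c : ℕ → ℕ, (∀ i, c i < c (i + 1)) ∧
    extract x 0 (c 0) ∈ V ∧ ∀ i, extract x (c i) (c (i + 1)) ∈ U}

/-- An ω-language is ω-rational if it is a finite union `⋃ᵢ Vᵢ · Uᵢ^ω`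
with all `Vᵢ`, `Uᵢ` rational (regular) languages of finite words. -/
def IsOmegaRat {A : Type} (L : Set (ℕ → A)) : Prop :=
  ∃ (n : ℕ) (V U : Fin n → Language A),
    (∀ i, (V i).IsRegular) ∧ (∀ i, (U i).IsRegular) ∧
    L = ⋃ i, omegaPiece (V i) (U i)

/-- Countable union of closed sets. -/
def IsFsigmaSet {X : Type*} [TopologicalSpace X] (S : Set X) : Prop :=
  ∃ f : ℕ → Set X, (∀ n, IsClosed (f n)) ∧ S = ⋃ n, f n

/-- Countable intersection of open sets. -/
def IsGdeltaSet {X : Type*} [TopologicalSpace X] (S : Set X) : Prop :=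
  ∃ f : ℕ → Set X, (∀ n, IsOpen (f n)) ∧ S = ⋂ n, f n

namespace Stmt9Aux
set_option linter.unusedSectionVars false

open Classical

/-- One step of the "pending set" tracking for a target set `F`: remove the
newly visited state from the pending set; if the pending set empties, reset to
`F` and raise the flag. -/
noncomputable def stepPend {Q : Type} (F S : Set Q) (q : Q) : Set Q × Bool :=
  if S ⊆ {q} then (F, true) else (S \ {q}, false)

lemma stepPend_cases {Q : Type} (F S : Set Q) (q : Q) :
    (S ⊆ {q} ∧ stepPend F S q = (F, true)) ∨
    (¬ S ⊆ {q} ∧ stepPend F S q = (S \ {q}, false)) := by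
  unfold stepPend
  by_cases h : S ⊆ {q} <;> simp [h]

section Abstract

variable {Q : Type} [Finite Q] {F : Set Q} {p : ℕ → Q} {S : ℕ → Set Q} {b : ℕ → Bool}

omit [Finite Q] in
lemma rec_cases (hrec : ∀ n, (S (n + 1), b (n + 1)) = stepPend F (S n) (p (n + 1))) (n : ℕ) :
    (S n ⊆ {p (n + 1)} ∧ S (n + 1) = F ∧ b (n + 1) = true) ∨
    (¬ S n ⊆ {p (n + 1)} ∧ S (n + 1) = S n \ {p (n + 1)} ∧ b (n + 1) = false) := by
  rcases stepPend_cases F (S n) (p (n + 1)) with ⟨hsub, heq⟩ | ⟨hsub, heq⟩ <;>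
    [left; right] <;>
    exact ⟨hsub, congrArg Prod.fst ((hrec n).trans heq),
      congrArg Prod.snd ((hrec n).trans heq)⟩

lemma pend_inv (hrec : ∀ n, (S (n + 1), b (n + 1)) = stepPend F (S n) (p (n + 1)))
    (hS0 : S 0 = F) : ∀ n, S n ⊆ F ∧ (F.Nonempty → (S n).Nonempty) := by
  intro n
  induction n with
  | zero => exact ⟨hS0.le, fun h => hS0 ▸ h⟩
  | succ n ih =>
    rcases rec_cases hrec n with ⟨hsub, hS, hb⟩ | ⟨hsub, hS, hb⟩
    · exact ⟨hS.le, fun h => hS ▸ h⟩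
    · rcases Set.not_subset.1 hsub with ⟨r, hrS, hrq⟩
      exact ⟨hS ▸ (Set.diff_subset.trans ih.1), fun _ => ⟨r, hS ▸ (⟨hrS, hrq⟩ : r ∈ S n \ {p (n+1)})⟩⟩

lemma fwd_aux (hrec : ∀ n, (S (n + 1), b (n + 1)) = stepPend F (S n) (p (n + 1)))
    (hS0 : S 0 = F) (hFne : F.Nonempty)
    (hinf : ∀ q ∈ F, ∀ n, ∃ m, n ≤ m ∧ p m = q) :
    ∀ k n, (S n).ncard ≤ k → ∃ m, n < m ∧ b m = true := by
  have inv := pend_inv hrec hS0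
  intro k
  induction k with
  | zero =>
    intro n hn
    have hpos : 0 < (S n).ncard := (Set.ncard_pos (Set.toFinite _)).2 ((inv n).2 hFne)
    omega
  | succ k ih =>
    intro n hn
    obtain ⟨q, hqS⟩ := (inv n).2 hFne
    obtain ⟨t, hnt, hpt⟩ := hinf q ((inv n).1 hqS) (n + 1)
    by_cases hres : ∃ m, n < m ∧ m ≤ t ∧ b m = true
    · obtain ⟨m, h1, _, h3⟩ := hres; exact ⟨m, h1, h3⟩
    push_neg at hres
    -- no reset in (n, t]; the pending set only shrinks
    have mono : ∀ d, n + d ≤ t → S (n + d) ⊆ S n := by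
      intro d
      induction d with
      | zero => intro _; exact le_refl _
      | succ d ihd =>
        intro hd
        rcases rec_cases hrec (n + d) with ⟨hsub, hS, hb⟩ | ⟨hsub, hS, hb⟩
        · exact absurd hb (hres (n + d + 1) (by omega) (by omega))
        · have : S (n + (d + 1)) = S (n + d) \ {p (n + d + 1)} := hS
          rw [this]
          exact Set.diff_subset.trans (ihd (by omega))
    have hq_not : q ∉ S t ∧ S t ⊆ S n := by
      obtain ⟨t', rfl⟩ : ∃ t', t = t' + 1 := ⟨t - 1, by omega⟩
      rcases rec_cases hrec t' with ⟨hsub, hS, hb⟩ | ⟨hsub, hS, hb⟩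
      · exact absurd hb (hres (t' + 1) (by omega) (by omega))
      · constructor
        · rw [hS, hpt]; simp
        · rw [hS]
          have ht' : t' = n + (t' - n) := by omega
          exact Set.diff_subset.trans (ht' ▸ mono (t' - n) (by omega))
    have hsubq : S t ⊆ S n \ {q} := Set.subset_diff_singleton hq_not.2 hq_not.1
    have hcard : (S t).ncard ≤ k := by
      have h2 := Set.ncard_le_ncard hsubq (Set.toFinite _)
      have h3 := Set.ncard_diff_singleton_lt_of_mem hqS (Set.toFinite _)
      omega
    obtain ⟨m, hm1, hm2⟩ := ih t hcard
    exact ⟨m, by omega, hm2⟩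

/-- If every state of `F` is visited infinitely often, the flag is raised
infinitely often. -/
lemma fwd (hrec : ∀ n, (S (n + 1), b (n + 1)) = stepPend F (S n) (p (n + 1)))
    (hS0 : S 0 = F) (hinf : ∀ q ∈ F, ∀ n, ∃ m, n ≤ m ∧ p m = q) :
    ∀ n, ∃ m, n ≤ m ∧ b m = true := by
  intro n
  by_cases hFne : F.Nonempty
  · obtain ⟨m, hm1, hm2⟩ := fwd_aux hrec hS0 hFne hinf (S n).ncard n le_rfl
    exact ⟨m, hm1.le, hm2⟩
  · rw [Set.not_nonempty_iff_eq_empty] at hFne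
    have hempty : S n = ∅ := Set.subset_eq_empty ((pend_inv hrec hS0 n).1) (by rw [hFne])
    rcases rec_cases hrec n with ⟨hsub, hS, hb⟩ | ⟨hsub, hS, hb⟩
    · exact ⟨n + 1, by omega, hb⟩
    · exact absurd (hempty ▸ (Set.empty_subset _)) hsub

/-- If the flag is raised infinitely often, every state of `F` is visited
infinitely often. -/
lemma bwd (hrec : ∀ n, (S (n + 1), b (n + 1)) = stepPend F (S n) (p (n + 1)))
    (hreset : ∀ n, ∃ m, n ≤ m ∧ b m = true) :
    ∀ q ∈ F, ∀ n, ∃ m, n ≤ m ∧ p m = q := by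
  intro q hqF n
  obtain ⟨m₁, hm₁, hb₁⟩ := hreset (n + 1)
  obtain ⟨m₂, hm₂, hb₂⟩ := hreset (m₁ + 1)
  -- at a reset time the pending set is `F`
  have hSm₁ : S m₁ = F := by
    obtain ⟨t, rfl⟩ : ∃ t, m₁ = t + 1 := ⟨m₁ - 1, by omega⟩
    rcases rec_cases hrec t with ⟨hsub, hS, hb⟩ | ⟨hsub, hS, hb⟩
    · exact hS
    · rw [hb] at hb₁; exact absurd hb₁ (by simp)
  by_contra hno
  push_neg at hno
  have hno' : ∀ t, n ≤ t → p t ≠ q := hno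
  -- q stays pending forever after m₁
  have hstay : ∀ d, q ∈ S (m₁ + d) := by
    intro d
    induction d with
    | zero => show q ∈ S m₁; rw [hSm₁]; exact hqF
    | succ d ihd =>
      rcases rec_cases hrec (m₁ + d) with ⟨hsub, hS, hb⟩ | ⟨hsub, hS, hb⟩
      · show q ∈ S (m₁ + d + 1); rw [hS]; exact hqF
      · show q ∈ S (m₁ + d + 1)
        rw [hS]
        exact ⟨ihd, fun h => hno' (m₁ + d + 1) (by omega) (by simpa using h.symm)⟩
  -- but the reset at m₂ empties the pending set through p m₂
  obtain ⟨t, rfl⟩ : ∃ t, m₂ = t + 1 := ⟨m₂ - 1, by omega⟩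
  rcases rec_cases hrec t with ⟨hsub, hS, hb⟩ | ⟨hsub, hS, hb⟩
  · have hq : q ∈ S t := by
      have ht : t = m₁ + (t - m₁) := by omega
      rw [ht]; exact hstay _
    exact hno' (t + 1) (by omega) (by simpa using (hsub hq).symm)
  · rw [hb] at hb₂; exact absurd hb₂ (by simp)

/-- Pigeonhole: if a property of the path's states holds at infinitely many
times, some fixed state satisfying it recurs infinitely often. -/
lemma pigeon (p : ℕ → Q) (P : Q → Prop)
    (h : ∀ n, ∃ m, n ≤ m ∧ P (p m)) :
    ∃ s, P s ∧ ∀ n, ∃ m, n ≤ m ∧ p m = s := by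
  have hT : ({m | P (p m)} : Set ℕ).Infinite := by
    intro hfin
    obtain ⟨N, hN⟩ := hfin.bddAbove
    obtain ⟨m, hm1, hm2⟩ := h (N + 1)
    have := hN hm2
    omega
  have hex : ∃ s : Q, ({m | P (p m) ∧ p m = s} : Set ℕ).Infinite := by
    by_contra hall
    push_neg at hall
    have hsub : ({m | P (p m)} : Set ℕ) ⊆ ⋃ s : Q, {m | P (p m) ∧ p m = s} :=
      fun m hm => Set.mem_iUnion.2 ⟨p m, hm, rfl⟩
    exact hT ((Set.finite_iUnion hall).subset hsub)
  obtain ⟨s, hs⟩ := hex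
  refine ⟨s, ?_, ?_⟩
  · obtain ⟨m, hm⟩ := hs.nonempty
    exact hm.2 ▸ hm.1
  · intro n
    by_contra hno
    push_neg at hno
    refine hs ((Set.finite_Iio n).subset fun m hm => ?_)
    simp only [Set.mem_Iio]
    by_contra hge
    exact hno m (by omega) hm.2

end Abstract

variable {A : Type}

/-- The augmented automaton: the original state together with, for each set `F`
of the acceptance table, a pending subset of `F` and a reset flag. -/
noncomputable def aug (M : OFA A) : OFA A where
  Q := M.Q × ({F : Set M.Q // F ∈ M.Acc} → Set M.Q × Bool)
  finQ := by have := M.finQ; infer_instance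
  T := fun s a s' => M.T s.1 a s'.1 ∧ ∀ i, s'.2 i = stepPend i.1 (s.2 i).1 s'.1
  q0 := (M.q0, fun i => (i.1, false))
  Acc := {{s | ∃ i, (s.2 i).2 = true}}

lemma aug_det (M : OFA A) (h : M.Deterministic) : (aug M).Deterministic := by
  rintro ⟨p, σ⟩ a ⟨q, τ⟩ ⟨q', τ'⟩ ⟨h1, h2⟩ ⟨h1', h2'⟩
  obtain rfl : q = q' := h _ _ _ _ h1 h1'
  have : τ = τ' := funext fun i => (h2 i).trans (h2' i).symm
  rw [this]

lemma aug_comp (M : OFA A) (h : M.Complete) : (aug M).Complete := by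
  rintro ⟨p, σ⟩ a
  obtain ⟨q, hq⟩ := h p a
  exact ⟨(q, fun i => stepPend i.1 (σ i).1 q), hq, fun i => rfl⟩

/-- The canonical lifting of a path of `M` to a path of `aug M`. -/
noncomputable def lift (M : OFA A) (p : ℕ → M.Q) : ℕ → (aug M).Q
  | 0 => (aug M).q0
  | n + 1 => (p (n + 1), fun i => stepPend i.1 ((lift M p n).2 i).1 (p (n + 1)))

lemma lift_fst (M : OFA A) (p : ℕ → M.Q) (h0 : p 0 = M.q0) :
    ∀ n, (lift M p n).1 = p n := by
  intro n
  cases n with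
  | zero => exact h0.symm
  | succ n => rfl

theorem langL_eq (M : OFA A) : (aug M).Lang CSel.inf RSel.meet = M.LangL := by
  ext x
  constructor
  · -- Büchi-accepted in aug M ⟹ Muller-accepted in M
    rintro ⟨s, ⟨hs0, hsT⟩, F', hF', hmeet⟩
    obtain rfl : F' = {t : (aug M).Q | ∃ i, (t.2 i).2 = true} := hF'
    obtain ⟨t, htinf, i, hflag⟩ := hmeet
    refine ⟨fun n => (s n).1, ⟨congrArg Prod.fst hs0, fun n => (hsT n).1⟩, i.1, i.2, ?_⟩
    have hrec : ∀ n, (((s (n + 1)).2 i).1, ((s (n + 1)).2 i).2) =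
        stepPend i.1 (((s n).2 i).1) ((s (n + 1)).1) := by
      intro n; rw [← (hsT n).2 i]
    have hreset : ∀ n, ∃ m, n ≤ m ∧ ((s m).2 i).2 = true := by
      intro n
      obtain ⟨m, hm1, hm2⟩ := htinf n
      exact ⟨m, hm1, by rw [hm2]; exact hflag⟩
    intro q hq
    exact bwd (S := fun n => ((s n).2 i).1) (b := fun n => ((s n).2 i).2)
      (p := fun n => (s n).1) hrec hreset q hq
  · -- Muller-accepted in M ⟹ Büchi-accepted in aug M
    rintro ⟨p, ⟨hp0, hpT⟩, F, hF, hFinf⟩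
    set i : {F : Set M.Q // F ∈ M.Acc} := ⟨F, hF⟩
    have hfst := lift_fst M p hp0
    refine ⟨lift M p, ⟨rfl, fun n => ⟨?_, fun j => ?_⟩⟩, _, rfl, ?_⟩
    · rw [hfst n, hfst (n + 1)]; exact hpT n
    · show (lift M p (n + 1)).2 j = _
      rw [hfst (n + 1)]; rfl
    · -- the meet condition
      have hrec : ∀ n, (((lift M p (n + 1)).2 i).1, ((lift M p (n + 1)).2 i).2) =
          stepPend i.1 (((lift M p n).2 i).1) (p (n + 1)) := fun n => rfl
      have hS0 : ((lift M p 0).2 i).1 = i.1 := rfl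
      have hinf' : ∀ q ∈ i.1, ∀ n, ∃ m, n ≤ m ∧ p m = q := fun q hq n => hFinf hq n
      have hflag := fwd (S := fun n => ((lift M p n).2 i).1)
        (b := fun n => ((lift M p n).2 i).2) (p := p) hrec hS0 hinf'
      have := M.finQ
      obtain ⟨t, htP, htinf⟩ := pigeon (lift M p) (fun t => ((t.2 i).2 : Bool) = true) hflag
      exact ⟨t, htinf, i, htP⟩

end Stmt9Aux

theorem stmt_9 (A : Type) [Fintype A] :
    AutClass A (fun M : OFA A => M.Deterministic ∧ M.Complete) OFA.LangL ⊆ AutClass A (fun M : OFA A => M.Deterministic ∧ M.Complete) (fun M => M.Lang CSel.inf RSel.meet) := by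
  rintro X ⟨M, ⟨hdet, hcomp⟩, rfl⟩
  exact ⟨Stmt9Aux.aug M, ⟨Stmt9Aux.aug_det M hdet, Stmt9Aux.aug_comp M hcomp⟩,
    Stmt9Aux.langL_eq M⟩
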